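/- Let 0 = n₀ < n₁ < ⋯ < n_k be fixed integers and E = ⋃_{j=0}^k ([0,2π) + 2π n_j). For f ∈ L²(ℝ), let F be the 2π-periodic extension of ξ ↦ ∑_{j=0}^k f(ξ + 2π n_j) for ξ ∈ [0,2π). Then ⟨H⁰_E f, f⟩ = (1/(k+1)) ‖F · χ_E‖², where H⁰_E f = F · χ_E. -/

import Mathlib

open MeasureTheory Real
open scoped ENNReal

private theorem mulL2 (f g : ℝ → ℂ) (hf : MemLp f 2 volume) (hg : MemLp g 2 volume) :
    Integrable (fun x => f x * g x) volume := by
  rw [← memLp_one_iff_integrable]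
  have h : (1 : ℝ≥0∞)/1 = 1/2 + 1/2 := by
    rw [ENNReal.div_add_div_same, div_one]
    norm_num [ENNReal.div_self two_ne_zero ENNReal.ofNat_ne_top]
  haveI : ENNReal.HolderTriple 2 2 1 := ⟨by rw [ENNReal.inv_two_add_inv_two, inv_one]⟩
  have := hg.smul (r := 1) hf
  simpa [smul_eq_mul, mul_comm, Pi.mul_def] using this

private theorem conjL2 (f : ℝ → ℂ) (hf : MemLp f 2 volume) :
    MemLp (fun x => (starRingEnd ℂ) (f x)) 2 volume :=
  ⟨Complex.continuous_conj.comp_aestronglyMeasurable hf.1, by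
    rw [show (fun x => (starRingEnd ℂ) (f x)) = (starRingEnd (ℝ → ℂ)) f from rfl, eLpNorm_conj]
    exact hf.2⟩

theorem stmt_2 (k : ℕ) (n : Fin (k + 1) → ℤ)
    (hn0 : n 0 = 0) (hmono : StrictMono n)
    (E : Set ℝ)
    (hE : E = ⋃ j : Fin (k + 1),
      Set.Ico (2 * π * (n j : ℝ)) (2 * π * (n j : ℝ) + 2 * π))
    (f : ℝ → ℂ) (hf : MemLp f 2 volume)
    (F : ℝ → ℂ)
    (hF : F = fun ξ : ℝ => ∑ j : Fin (k + 1),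
      f ((ξ - 2 * π * (⌊ξ / (2 * π)⌋ : ℝ)) + 2 * π * (n j : ℝ))) :
    ∫ ξ : ℝ, (F ξ * E.indicator (fun _ => (1 : ℂ)) ξ) * (starRingEnd ℂ) (f ξ) =
      (((1 : ℝ) / (k + 1)) *
        ∫ ξ : ℝ, ‖F ξ * E.indicator (fun _ => (1 : ℂ)) ξ‖ ^ 2 : ℝ) := by
  have h2π : (0:ℝ) < 2 * π := by positivity
  set c : Fin (k+1) → ℝ := fun j => 2 * π * (n j : ℝ) with hc
  set I : Fin (k+1) → Set ℝ := fun j => Set.Ico (c j) (c j + 2 * π) with hI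
  set G : ℝ → ℂ := fun η => ∑ j, f (η + c j) with hGdef
  have hIm : ∀ j, MeasurableSet (I j) := fun j => measurableSet_Ico
  have hEm : MeasurableSet E := by rw [hE]; exact MeasurableSet.iUnion (fun j => measurableSet_Ico)
  -- floor on I j
  have hfloor : ∀ j, ∀ ξ ∈ I j, (⌊ξ / (2 * π)⌋ : ℤ) = n j := by
    intro j ξ hξ
    obtain ⟨h1, h2⟩ := hξ
    have h1' : 2 * π * (n j : ℝ) ≤ ξ := h1
    have h2' : ξ < 2 * π * (n j : ℝ) + 2 * π := h2
    rw [Int.floor_eq_iff]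
    constructor
    · rw [le_div_iff₀ h2π]; nlinarith
    · rw [div_lt_iff₀ h2π]; push_cast; nlinarith
  -- F equals translated G on I j
  have hFG : ∀ j, ∀ ξ ∈ I j, F ξ = G (ξ - c j) := by
    intro j ξ hξ
    rw [hF, hGdef]
    simp only
    refine Finset.sum_congr rfl (fun i _ => ?_)
    rw [hfloor j ξ hξ]
  -- L² facts
  have hT : ∀ a : ℝ, MemLp (fun x => f (x + a)) 2 volume := fun a =>
    hf.comp_measurePreserving (measurePreserving_add_right volume a)
  have hG2 : MemLp G 2 volume := by
    rw [hGdef]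
    exact memLp_finset_sum Finset.univ (fun i _ => hT (c i))
  have hGc : ∀ a : ℝ, MemLp (fun ξ => G (ξ + a)) 2 volume := fun a =>
    hG2.comp_measurePreserving (measurePreserving_add_right volume a)
  -- pairwise disjointness
  have hdisj : Pairwise (Function.onFun Disjoint I) := by
    have key : ∀ i j : Fin (k+1), i < j → Disjoint (I i) (I j) := by
      intro i j hij
      have h1 : (n i : ℝ) + 1 ≤ (n j : ℝ) := by exact_mod_cast Int.add_one_le_iff.mpr (hmono hij)
      rw [Set.disjoint_left]
      intro ξ hξi hξj
      have ha : 2 * π * (n i : ℝ) ≤ ξ := hξi.1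
      have hb : ξ < 2 * π * (n i : ℝ) + 2 * π := hξi.2
      have hc' : 2 * π * (n j : ℝ) ≤ ξ := hξj.1
      nlinarith
    intro i j hij
    rcases lt_or_gt_of_ne hij with h | h
    · exact key i j h
    · exact (key j i h).symm
  -- integrability pieces
  have hconj : MemLp (fun x => (starRingEnd ℂ) (f x)) 2 volume := conjL2 f hf
  have hint1 : ∀ a : ℝ, Integrable (fun ξ => G (ξ + a) * (starRingEnd ℂ) (f ξ)) volume :=
    fun a => mulL2 _ _ (hGc a) hconj
  have hint1' : ∀ a : ℝ, Integrable (fun η => G η * (starRingEnd ℂ) (f (η + a))) volume :=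
    fun a => mulL2 _ _ hG2 (conjL2 _ (hT a))
  have hintsq : ∀ a : ℝ, Integrable (fun ξ => ‖G (ξ + a)‖ ^ 2) volume := fun a =>
    (memLp_two_iff_integrable_sq_norm (hGc a).1).mp (hGc a)
  -- indicator rewrites
  have hL : (fun ξ => (F ξ * E.indicator (fun _ => (1:ℂ)) ξ) * (starRingEnd ℂ) (f ξ)) =
      E.indicator (fun ξ => F ξ * (starRingEnd ℂ) (f ξ)) := by
    funext ξ
    by_cases hξ : ξ ∈ E
    · simp [Set.indicator_of_mem hξ]
    · simp [Set.indicator_of_notMem hξ]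
  have hR : (fun ξ => ‖F ξ * E.indicator (fun _ => (1:ℂ)) ξ‖ ^ 2) =
      E.indicator (fun ξ => ‖F ξ‖ ^ 2) := by
    funext ξ
    by_cases hξ : ξ ∈ E
    · simp [Set.indicator_of_mem hξ]
    · simp [Set.indicator_of_notMem hξ]
  -- translation identity for set integrals over I j
  have htrans : ∀ {α : Type} [inst : NormedAddCommGroup α] [inst2 : NormedSpace ℝ α]
      (g : ℝ → α) (j : Fin (k+1)),
      ∫ ξ in I j, g ξ = ∫ η in Set.Ico (0:ℝ) (2*π), g (η + c j) := by
    intro α _ _ g j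
    rw [← integral_indicator (hIm j), ← integral_indicator measurableSet_Ico,
      ← integral_add_right_eq_self (fun ξ => (I j).indicator g ξ) (c j)]
    congr 1
    funext η
    by_cases hη : η ∈ Set.Ico (0:ℝ) (2*π)
    · have hm : η + c j ∈ I j := ⟨by linarith [hη.1], by linarith [hη.2]⟩
      rw [Set.indicator_of_mem hm, Set.indicator_of_mem hη]
    · have hm : η + c j ∉ I j := by
        intro hmem
        exact hη ⟨by linarith [hmem.1], by linarith [hmem.2]⟩
      rw [Set.indicator_of_notMem hm, Set.indicator_of_notMem hη]
  -- IntegrableOn for the union pieces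
  have hIOn : ∀ j, IntegrableOn (fun ξ => F ξ * (starRingEnd ℂ) (f ξ)) (I j) volume := by
    intro j
    apply IntegrableOn.congr_fun ((hint1 (-(c j))).integrableOn) _ (hIm j)
    intro ξ hξ
    simp only
    rw [hFG j ξ hξ, sub_eq_add_neg]
  have hIOnsq : ∀ j, IntegrableOn (fun ξ => ‖F ξ‖ ^ 2) (I j) volume := by
    intro j
    apply IntegrableOn.congr_fun ((hintsq (-(c j))).integrableOn) _ (hIm j)
    intro ξ hξ
    simp only
    rw [hFG j ξ hξ, sub_eq_add_neg]
  -- LHS computation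
  have hLHS : ∫ ξ : ℝ, (F ξ * E.indicator (fun _ => (1:ℂ)) ξ) * (starRingEnd ℂ) (f ξ) =
      ∫ η in Set.Ico (0:ℝ) (2*π), ((‖G η‖ ^ 2 : ℝ) : ℂ) := by
    rw [hL, integral_indicator hEm, hE, integral_iUnion_fintype hIm hdisj hIOn]
    have step1 : ∀ j, ∫ ξ in I j, F ξ * (starRingEnd ℂ) (f ξ) =
        ∫ η in Set.Ico (0:ℝ) (2*π), G η * (starRingEnd ℂ) (f (η + c j)) := by
      intro j
      rw [setIntegral_congr_fun (hIm j) (g := fun ξ => G (ξ - c j) * (starRingEnd ℂ) (f ξ))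
        (fun ξ hξ => by simp only; rw [hFG j ξ hξ]),
        htrans (fun ξ => G (ξ - c j) * (starRingEnd ℂ) (f ξ)) j]
      simp
    simp_rw [step1]
    rw [← integral_finset_sum _ (fun j _ => ((hint1' (c j)).integrableOn))]
    refine setIntegral_congr_fun measurableSet_Ico (fun η _ => ?_)
    rw [← Finset.mul_sum, ← map_sum]
    have hg : (∑ i : Fin (k+1), f (η + c i)) = G η := rfl
    rw [hg, Complex.mul_conj, Complex.normSq_eq_norm_sq]
  -- RHS computation
  have hRHS : ∫ ξ : ℝ, ‖F ξ * E.indicator (fun _ => (1:ℂ)) ξ‖ ^ 2 =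
      ((k:ℝ) + 1) * ∫ η in Set.Ico (0:ℝ) (2*π), ‖G η‖ ^ 2 := by
    rw [hR, integral_indicator hEm, hE, integral_iUnion_fintype hIm hdisj hIOnsq]
    have step2 : ∀ j, ∫ ξ in I j, ‖F ξ‖ ^ 2 =
        ∫ η in Set.Ico (0:ℝ) (2*π), ‖G η‖ ^ 2 := by
      intro j
      rw [setIntegral_congr_fun (hIm j) (g := fun ξ => ‖G (ξ - c j)‖ ^ 2)
        (fun ξ hξ => by simp only; rw [hFG j ξ hξ]),
        htrans (fun ξ => ‖G (ξ - c j)‖ ^ 2) j]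
      simp
    simp_rw [step2]
    rw [Finset.sum_const, Finset.card_univ, Fintype.card_fin, nsmul_eq_mul]
    push_cast
    ring
  rw [hLHS, hRHS]
  have hk : ((k:ℝ) + 1) ≠ 0 := by positivity
  rw [one_div, inv_mul_cancel_left₀ hk]
  exact integral_ofReal
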